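/- Let J be an interval in ℝ and c : ℝ → ℝ → ℝ a cost function on [a,b] × J with a < b, such that x ↦ c(x,y) is continuous on [a,b] for each y ∈ J. Let μ be a Borel probability measure on [a,b] with barycenter b_μ = ∫ₐᵇ x dμ(x) lying in (a,b). Let f : ℝ → ℝ be continuous on [a,b] and let y ∈ J be a c-subgradient of f at b_μ. Then f(b_μ) + ∫ₐᵇ [c(x,y) − c(b_μ, y)] dμ(x) ≤ ∫ₐᵇ f(x) dμ(x). -/

import Mathlib

open MeasureTheory

/-- Weighted integral Jensen inequality for `c`-convex functions with respect to a
Borel probability measure `μ` on `[a,b]` with barycenter `b_μ = ∫ x dμ ∈ (a,b)`: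
if `y ∈ J` is a `c`-subgradient of `f` at `b_μ`, then
`f(b_μ) + ∫ [c(x,y) − c(b_μ,y)] dμ ≤ ∫ f dμ`. -/
theorem weighted_integral_jensen_c_convex
    (a b : ℝ) (hab : a < b) (J : Set ℝ) (hJ : Convex ℝ J)
    (c : ℝ → ℝ → ℝ)
    (hc : ∀ y ∈ J, ContinuousOn (fun x => c x y) (Set.Icc a b))
    (f : ℝ → ℝ) (hf : ContinuousOn f (Set.Icc a b))
    (μ : Measure ℝ) [IsProbabilityMeasure μ]
    (hsupp : μ (Set.Icc a b)ᶜ = 0)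
    (hbar : (∫ x, x ∂μ) ∈ Set.Ioo a b)
    (y : ℝ) (hyJ : y ∈ J)
    (hy : ∀ x ∈ Set.Icc a b,
      f x ≥ f (∫ x, x ∂μ) + c x y - c (∫ x, x ∂μ) y) :
    f (∫ x, x ∂μ) + ∫ x, (c x y - c (∫ x, x ∂μ) y) ∂μ ≤ ∫ x, f x ∂μ := by
  set m := ∫ x, x ∂μ with hm
  have hae : ∀ᵐ x ∂μ, x ∈ Set.Icc a b := by
    rw [ae_iff]
    convert hsupp using 2
    rfl
  have hrestr : μ.restrict (Set.Icc a b) = μ :=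
    Measure.restrict_eq_self_of_ae_mem (hae.mono fun x hx => hx)
  have hintc : Integrable (fun x => c x y - c m y) μ := by
    rw [← hrestr]
    exact ((hc y hyJ).sub continuousOn_const).integrableOn_compact isCompact_Icc
  have hintf : Integrable f μ := by
    rw [← hrestr]
    exact hf.integrableOn_compact isCompact_Icc
  have h1 : f m + ∫ x, (c x y - c m y) ∂μ
      = ∫ x, (f m + (c x y - c m y)) ∂μ := by
    rw [integral_add (integrable_const _) hintc, integral_const]
    simp
  rw [h1]
  refine integral_mono_ae ((integrable_const _).add hintc) hintf ?_
  filter_upwards [hae] with x hx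
  have := hy x hx
  linarith
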